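/- Let G_n consist of the center p of a unit circle C and the m = n−1 vertices of a regular m-gon inscribed in C, with m ≥ 3. Then any closed disk whose interior contains no point of G_n and whose boundary passes through at least one vertex of the m-gon can have at most two vertices of the m-gon on its boundary, and if it has two, they are consecutive vertices. -/

import Mathlib

open Real

/-- The `i`-th vertex of a regular `m`-gon inscribed in the circle of center
`c` and radius `R`. -/
noncomputable def polygonVertex (c : EuclideanSpace ℝ (Fin 2)) (R : ℝ) (m : ℕ)
    (i : Fin m) : EuclideanSpace ℝ (Fin 2) :=
  let v : EuclideanSpace ℝ (Fin 2) := WithLp.toLp 2 ![cos (2 * π * i / m), sin (2 * π * i / m)]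
  c + R • v

namespace GadgetAux

/-- The scalar support function `a cos θ_k + b sin θ_k`. -/
noncomputable def sc (m : ℕ) (a b : ℝ) (k : ℕ) : ℝ :=
  a * Real.cos (2 * π * k / m) + b * Real.sin (2 * π * k / m)

lemma sin_ne_zero_aux (m : ℕ) (hm : 0 < m) (u v : ℕ) (hu : u < m) (hv : v < m)
    (huv : u ≠ v) : Real.sin (π * ((u : ℝ) - v) / m) ≠ 0 := by
  intro h
  rw [Real.sin_eq_zero_iff] at h
  obtain ⟨k, hk⟩ := h
  have hm0 : (m : ℝ) ≠ 0 := Nat.cast_ne_zero.mpr hm.ne'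
  have hπ : (0:ℝ) < π := Real.pi_pos
  have h2 : (k : ℝ) * m = (u : ℝ) - v := by
    field_simp at hk
    nlinarith [hk]
  have hu' : (u : ℝ) < m := by exact_mod_cast hu
  have hv' : (v : ℝ) < m := by exact_mod_cast hv
  have hu0 : (0:ℝ) ≤ (u:ℝ) := Nat.cast_nonneg u
  have hv0 : (0:ℝ) ≤ (v:ℝ) := Nat.cast_nonneg v
  have hm' : (0:ℝ) < m := by positivity
  rcases lt_trichotomy k 0 with hk0 | hk0 | hk0
  · have hk1 : (k : ℝ) ≤ -1 := by exact_mod_cast (by omega : k ≤ -1)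
    nlinarith
  · subst hk0
    have huv' : (u : ℝ) = v := by
      push_cast at h2
      linarith
    exact huv (by exact_mod_cast huv')
  · have hk1 : (1:ℝ) ≤ (k : ℝ) := by exact_mod_cast hk0
    nlinarith

lemma pair_rel (m : ℕ) (hm : 0 < m) (a b : ℝ) (i j : ℕ) (hi : i < m) (hj : j < m)
    (hij : i ≠ j) (heq : sc m a b i = sc m a b j) :
    b * Real.cos (π * ((i : ℝ) + j) / m) = a * Real.sin (π * ((i : ℝ) + j) / m) := by
  have hm0 : (m : ℝ) ≠ 0 := Nat.cast_ne_zero.mpr hm.ne'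
  have hD : (2 * π * (i : ℝ) / m - 2 * π * (j : ℝ) / m) / 2 = π * ((i : ℝ) - j) / m := by
    field_simp
  have hS : (2 * π * (i : ℝ) / m + 2 * π * (j : ℝ) / m) / 2 = π * ((i : ℝ) + j) / m := by
    field_simp
  have e1 := Real.cos_sub_cos (2 * π * (i : ℝ) / m) (2 * π * (j : ℝ) / m)
  have e2 := Real.sin_sub_sin (2 * π * (i : ℝ) / m) (2 * π * (j : ℝ) / m)
  rw [hD, hS] at e1 e2
  unfold sc at heq
  have h1 : 2 * Real.sin (π * ((i : ℝ) - j) / m) *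
      (b * Real.cos (π * ((i : ℝ) + j) / m) - a * Real.sin (π * ((i : ℝ) + j) / m)) = 0 := by
    linear_combination heq - a * e1 - b * e2
  have h2 : Real.sin (π * ((i : ℝ) - j) / m) ≠ 0 := sin_ne_zero_aux m hm i j hi hj hij
  rcases mul_eq_zero.mp h1 with h | h
  · rcases mul_eq_zero.mp h with h' | h'
    · norm_num at h'
    · exact absurd h' h2
  · linarith

lemma scalar_three (m : ℕ) (hm : 0 < m) (a b : ℝ) (i j k : ℕ)
    (hi : i < m) (hj : j < m) (hk : k < m)
    (hij : i ≠ j) (hjk : j ≠ k) (hik : i ≠ k)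
    (hsi : 1 / 2 ≤ sc m a b i)
    (e1 : sc m a b i = sc m a b j) (e2 : sc m a b i = sc m a b k) : False := by
  have hm0 : (m : ℝ) ≠ 0 := Nat.cast_ne_zero.mpr hm.ne'
  have E1 := pair_rel m hm a b i j hi hj hij e1
  have E2 := pair_rel m hm a b i k hi hk hik e2
  set σ1 := π * ((i : ℝ) + j) / m with hσ1
  set σ2 := π * ((i : ℝ) + k) / m with hσ2
  have hab : ¬(a = 0 ∧ b = 0) := by
    rintro ⟨rfl, rfl⟩
    unfold sc at hsi
    norm_num at hsi
  have hsin : Real.sin (π * ((j : ℝ) - k) / m) ≠ 0 := sin_ne_zero_aux m hm j k hj hk hjk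
  have hdiff : σ1 - σ2 = π * ((j : ℝ) - k) / m := by
    rw [hσ1, hσ2]; field_simp; ring
  have hA : a * Real.sin (σ1 - σ2) = 0 := by
    rw [Real.sin_sub]
    linear_combination Real.cos σ1 * E2 - Real.cos σ2 * E1
  have hB : b * Real.sin (σ1 - σ2) = 0 := by
    rw [Real.sin_sub]
    linear_combination Real.sin σ1 * E2 - Real.sin σ2 * E1
  rw [hdiff] at hA hB
  rcases mul_eq_zero.mp hA with ha | h
  · rcases mul_eq_zero.mp hB with hb | h
    · exact hab ⟨ha, hb⟩
    · exact hsin h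
  · exact hsin h

set_option maxHeartbeats 2000000 in
lemma scalar_two (m : ℕ) (a b : ℝ) (i j : ℕ) (hi : i < m) (hj : j < m)
    (hij : i < j) (hd2 : 2 ≤ j - i) (hdm : j - i ≤ m - 2)
    (hs : ∀ k, k < m → sc m a b k ≤ sc m a b i)
    (hsi : 1 / 2 ≤ sc m a b i)
    (heq : sc m a b i = sc m a b j) : False := by
  have hm4 : 4 ≤ m := by omega
  have hm : 0 < m := by omega
  have hm0 : (m : ℝ) ≠ 0 := Nat.cast_ne_zero.mpr hm.ne'
  have hmR : (0:ℝ) < m := by positivity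
  have hπ : (0:ℝ) < π := Real.pi_pos
  set d : ℕ := j - i with hdd
  have hjd : j = i + d := by omega
  have E := pair_rel m hm a b i j hi hj (by omega) heq
  set σ := π * ((i : ℝ) + j) / m with hσ
  set t := a * Real.cos σ + b * Real.sin σ with ht
  have ha : a = t * Real.cos σ := by
    rw [ht]
    linear_combination (-Real.sin σ) * E - a * Real.sin_sq_add_cos_sq σ
  have hb : b = t * Real.sin σ := by
    rw [ht]
    linear_combination Real.cos σ * E - b * Real.sin_sq_add_cos_sq σ
  have hS : ∀ k : ℕ, sc m a b k = t * Real.cos (2 * π * (k : ℝ) / m - σ) := by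
    intro k
    rw [Real.cos_sub]
    unfold sc
    linear_combination Real.cos (2 * π * (k : ℝ) / m) * ha + Real.sin (2 * π * (k : ℝ) / m) * hb
  -- the value at i
  have hAi : 2 * π * (i : ℝ) / m - σ = -(π * (d : ℝ) / m) := by
    rw [hσ]
    have : (j : ℝ) = (i : ℝ) + d := by exact_mod_cast hjd
    rw [this]; field_simp; ring
  have hSi : sc m a b i = t * Real.cos (π * (d : ℝ) / m) := by
    rw [hS i, hAi, Real.cos_neg]
  -- basic angle bounds
  have hd2R : (2:ℝ) ≤ (d : ℝ) := by exact_mod_cast hd2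
  have hdmR : (d : ℝ) ≤ (m : ℝ) - 2 := by
    have : (d : ℝ) ≤ ((m - 2 : ℕ) : ℝ) := by exact_mod_cast hdm
    have h2 : ((m - 2 : ℕ) : ℝ) = (m : ℝ) - 2 := by
      have : (2:ℕ) ≤ m := by omega
      push_cast [Nat.cast_sub this]; ring
    linarith [this, h2.le, h2.ge]
  have hmono : ∀ u v : ℝ, u < v → π * u / m < π * v / m := by
    intro u v h
    gcongr
  have hmono' : ∀ u v : ℝ, u ≤ v → π * u / m ≤ π * v / m := by
    intro u v h
    gcongr
  have hpim : π * (1:ℝ) / m = π / m := by ring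
  have hang1 : π / m < π * (d : ℝ) / m := by
    rw [← hpim]; exact hmono 1 d (by linarith)
  have hang2 : π * (d : ℝ) / m ≤ π * ((m : ℝ) - 2) / m := hmono' _ _ hdmR
  have hang3 : π * ((m : ℝ) - 2) / m < π := by
    have := hmono ((m:ℝ) - 2) m (by linarith)
    calc π * ((m : ℝ) - 2) / m < π * (m:ℝ) / m := this
    _ = π := by field_simp
  have hang0 : (0:ℝ) ≤ π / m := by positivity
  -- strict comparison of cosines
  have hcosd : Real.cos (π * (d : ℝ) / m) < Real.cos (π / m) :=
    Real.cos_lt_cos_of_nonneg_of_le_pi hang0 (by linarith) hang1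
  have htne : 1 / 2 ≤ t * Real.cos (π * (d : ℝ) / m) := by rw [← hSi]; exact hsi
  have hcoslow : Real.cos (π * ((m : ℝ) - 2) / m) ≤ Real.cos (π * (d : ℝ) / m) :=
    Real.cos_le_cos_of_nonneg_of_le_pi (by positivity) hang3.le hang2
  have heq2 : Real.cos (π * ((m : ℝ) - 2) / m) = -Real.cos (2 * π / m) := by
    rw [show π * ((m : ℝ) - 2) / m = π - 2 * π / m by field_simp, Real.cos_pi_sub]
  have hcos21 : Real.cos (2 * π / m) < Real.cos (π / m) := by
    apply Real.cos_lt_cos_of_nonneg_of_le_pi hang0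
    · rw [div_le_iff₀ hmR]
      have : (4:ℝ) ≤ m := by exact_mod_cast hm4
      nlinarith
    · rw [div_lt_div_iff₀ hmR hmR]
      nlinarith
  have hlow2 : -Real.cos (π / m) < Real.cos (π * (d : ℝ) / m) := by
    rw [heq2] at hcoslow; linarith
  have hlow : (-1 : ℝ) < Real.cos (π * (d : ℝ) / m) := by
    have := Real.cos_le_one (π / m)
    have h2 := Real.cos_le_one (2 * π / m)
    rw [heq2] at hcoslow
    linarith [hcos21]
  rcases lt_trichotomy t 0 with htneg | ht0 | htpos
  · -- t < 0 : pick a vertex on the far arc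
    set g : ℕ := m - d with hgg
    have hg2 : 2 ≤ g := by omega
    set f : ℕ := g / 2 with hff
    rcases Nat.even_or_odd g with ⟨q, hq⟩ | ⟨q, hq⟩
    · -- g = 2q even, angle will be ±π with cos = -1
      by_cases hcase : j + f < m
      · have hval : 2 * (j + f) = i + j + m := by omega
        have hc : 2 * ((j + f : ℕ) : ℝ) = (i : ℝ) + j + m := by exact_mod_cast hval
        have hangv : 2 * π * ((j + f : ℕ) : ℝ) / m - σ = π := by
          rw [hσ]; field_simp; push_cast at hc ⊢; linear_combination hc
        have hle := hs (j + f) hcase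
        rw [hS (j + f), hangv, Real.cos_pi, hSi] at hle
        nlinarith [hlow, htneg]
      · have hjfm : j + f - m < m := by omega
        have hval : 2 * (j + f - m) + m = i + j := by omega
        have hc : 2 * ((j + f - m : ℕ) : ℝ) + m = (i : ℝ) + j := by exact_mod_cast hval
        have hangv : 2 * π * ((j + f - m : ℕ) : ℝ) / m - σ = -π := by
          rw [hσ]; field_simp; push_cast at hc ⊢; linear_combination hc
        have hle := hs (j + f - m) hjfm
        rw [hS (j + f - m), hangv, Real.cos_neg, Real.cos_pi, hSi] at hle
        nlinarith [hlow, htneg]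
    · -- g = 2q + 1 odd, angle ±(π - π/m) (mod 2π), cos = -cos(π/m)
      by_cases hcase : j + f < m
      · have hval : 2 * (j + f) + 1 = i + j + m := by omega
        have hc : 2 * ((j + f : ℕ) : ℝ) + 1 = (i : ℝ) + j + m := by exact_mod_cast hval
        have hangv : 2 * π * ((j + f : ℕ) : ℝ) / m - σ = π - π / m := by
          rw [hσ]; field_simp; push_cast at hc ⊢; linear_combination hc
        have hle := hs (j + f) hcase
        rw [hS (j + f), hangv, Real.cos_pi_sub, hSi] at hle
        nlinarith [hlow2, htneg]
      · have hjfm : j + f - m < m := by omega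
        have hval : 2 * (j + f - m) + m + 1 = i + j := by omega
        have hc : 2 * ((j + f - m : ℕ) : ℝ) + m + 1 = (i : ℝ) + j := by exact_mod_cast hval
        have hangv : 2 * π * ((j + f - m : ℕ) : ℝ) / m - σ = -(π / m + π) := by
          rw [hσ]; field_simp; push_cast at hc ⊢; linear_combination hc
        have hle := hs (j + f - m) hjfm
        rw [hS (j + f - m), hangv, Real.cos_neg, Real.cos_add_pi, hSi] at hle
        nlinarith [hlow2, htneg]
  · rw [ht0] at htne; norm_num at htne
  · -- t > 0 : pick a vertex inside the arc
    set k0 : ℕ := i + d / 2 with hk00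
    have hk0m : k0 < m := by omega
    have hle := hs k0 hk0m
    rcases Nat.even_or_odd d with ⟨q, hq⟩ | ⟨q, hq⟩
    · have hval : 2 * k0 = i + j := by omega
      have hc : 2 * ((k0 : ℕ) : ℝ) = (i : ℝ) + j := by exact_mod_cast hval
      have hangv : 2 * π * ((k0 : ℕ) : ℝ) / m - σ = 0 := by
        rw [hσ]; field_simp; push_cast at hc ⊢; linear_combination π * hc
      rw [hS k0, hangv, Real.cos_zero, hSi] at hle
      nlinarith [Real.cos_le_one (π / m), hcosd, htpos]
    · have hval : 2 * k0 + 1 = i + j := by omega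
      have hc : 2 * ((k0 : ℕ) : ℝ) + 1 = (i : ℝ) + j := by exact_mod_cast hval
      have hangv : 2 * π * ((k0 : ℕ) : ℝ) / m - σ = -(π / m) := by
        rw [hσ]; field_simp; push_cast at hc ⊢; linear_combination hc
      rw [hS k0, hangv, Real.cos_neg, hSi] at hle
      nlinarith [hcosd, htpos]

end GadgetAux

/-- In the `n`-gadget (center `p` of a unit circle together with the `m = n−1`
vertices of an inscribed regular `m`-gon, `m ≥ 3`), any closed disk whose
interior misses all gadget points and whose boundary passes through at least
one vertex has at most two vertices on its boundary, and if two, they are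
consecutive. -/
theorem gadget_empty_disk_vertices (n : ℕ) (m : ℕ) (hm : m = n - 1)
    (hm3 : 3 ≤ m) (p : EuclideanSpace ℝ (Fin 2))
    (o : EuclideanSpace ℝ (Fin 2)) (r : ℝ) (hr : 0 < r)
    (hempty_p : p ∉ Metric.ball o r)
    (hempty_v : ∀ i : Fin m, polygonVertex p 1 m i ∉ Metric.ball o r)
    (hsupp : ∃ i : Fin m, polygonVertex p 1 m i ∈ Metric.sphere o r) :
    (¬ ∃ i j k : Fin m, i ≠ j ∧ j ≠ k ∧ i ≠ k ∧
        polygonVertex p 1 m i ∈ Metric.sphere o r ∧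
        polygonVertex p 1 m j ∈ Metric.sphere o r ∧
        polygonVertex p 1 m k ∈ Metric.sphere o r) ∧
    (∀ i j : Fin m, i ≠ j →
      polygonVertex p 1 m i ∈ Metric.sphere o r →
      polygonVertex p 1 m j ∈ Metric.sphere o r →
      (j : ℕ) = ((i : ℕ) + 1) % m ∨ (i : ℕ) = ((j : ℕ) + 1) % m) := by
  have hmpos : 0 < m := by omega
  have hm0 : (m : ℝ) ≠ 0 := Nat.cast_ne_zero.mpr hmpos.ne'
  set a : ℝ := o 0 - p 0 with ha
  set b : ℝ := o 1 - p 1 with hb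
  set W : ℝ := a ^ 2 + b ^ 2 with hW
  -- squared distance from a vertex to o
  have key : ∀ k : Fin m, dist (polygonVertex p 1 m k) o ^ 2
      = 1 - 2 * GadgetAux.sc m a b k + W := by
    intro k
    rw [EuclideanSpace.dist_eq, Real.sq_sqrt (by positivity)]
    simp only [polygonVertex, Fin.sum_univ_two, Real.dist_eq, sq_abs,
      PiLp.add_apply, PiLp.smul_apply, Matrix.cons_val_zero, Matrix.cons_val_one,
      Matrix.head_cons, smul_eq_mul, one_mul]
    unfold GadgetAux.sc
    rw [hW, ha, hb]
    linear_combination Real.sin_sq_add_cos_sq (2 * π * (k : ℝ) / m)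
  have keyp : dist p o ^ 2 = W := by
    rw [EuclideanSpace.dist_eq, Real.sq_sqrt (by positivity)]
    simp only [Fin.sum_univ_two, Real.dist_eq, sq_abs]
    rw [hW, ha, hb]; ring
  have hWr : r ^ 2 ≤ W := by
    rw [← keyp]
    have h1 : r ≤ dist p o := by
      by_contra h
      exact hempty_p (Metric.mem_ball.mpr (by linarith))
    nlinarith [dist_nonneg (x := p) (y := o)]
  have hsph : ∀ k : Fin m, polygonVertex p 1 m k ∈ Metric.sphere o r →
      1 - 2 * GadgetAux.sc m a b k + W = r ^ 2 := by
    intro k hk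
    rw [Metric.mem_sphere] at hk
    rw [← key k, hk]
  have hball : ∀ k : Fin m, r ^ 2 ≤ 1 - 2 * GadgetAux.sc m a b k + W := by
    intro k
    have h1 : r ≤ dist (polygonVertex p 1 m k) o := by
      by_contra h
      exact hempty_v k (Metric.mem_ball.mpr (by linarith))
    rw [← key k]
    nlinarith [dist_nonneg (x := polygonVertex p 1 m k) (y := o)]
  constructor
  · rintro ⟨i, j, k, hij, hjk, hik, hi, hj, hk⟩
    have ei := hsph i hi
    have ej := hsph j hj
    have ek := hsph k hk
    have hsi : 1 / 2 ≤ GadgetAux.sc m a b i := by linarith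
    exact GadgetAux.scalar_three m hmpos a b i j k i.isLt j.isLt k.isLt
      (fun h => hij (Fin.ext h)) (fun h => hjk (Fin.ext h)) (fun h => hik (Fin.ext h))
      hsi (by linarith) (by linarith)
  · intro i j hij hi hj
    by_contra hcon
    push_neg at hcon
    obtain ⟨h1, h2⟩ := hcon
    have ei := hsph i hi
    have ej := hsph j hj
    have hvne : (i : ℕ) ≠ (j : ℕ) := fun h => hij (Fin.ext h)
    have hsi : 1 / 2 ≤ GadgetAux.sc m a b i := by linarith
    have heqij : GadgetAux.sc m a b i = GadgetAux.sc m a b j := by linarith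
    have hsall : ∀ k, k < m → GadgetAux.sc m a b k ≤ GadgetAux.sc m a b i := by
      intro k hk
      have := hball ⟨k, hk⟩
      have h3 : GadgetAux.sc m a b (⟨k, hk⟩ : Fin m) = GadgetAux.sc m a b k := rfl
      linarith [h3.ge, h3.le]
    rcases lt_or_gt_of_ne hvne with hlt | hgt
    · -- i < j
      have hd2 : 2 ≤ (j : ℕ) - (i : ℕ) := by
        have hi1 : ((i : ℕ) + 1) % m = (i : ℕ) + 1 := Nat.mod_eq_of_lt (by omega)
        omega
      have hdm : (j : ℕ) - (i : ℕ) ≤ m - 2 := by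
        by_contra h
        have hj1 : (j : ℕ) = m - 1 ∧ (i : ℕ) = 0 := by omega
        apply h2
        rw [hj1.1, hj1.2, show m - 1 + 1 = m by omega, Nat.mod_self]
      exact GadgetAux.scalar_two m a b i j i.isLt j.isLt hlt hd2 hdm hsall hsi heqij
    · -- j < i
      have hd2 : 2 ≤ (i : ℕ) - (j : ℕ) := by
        have hj1 : ((j : ℕ) + 1) % m = (j : ℕ) + 1 := Nat.mod_eq_of_lt (by omega)
        omega
      have hdm : (i : ℕ) - (j : ℕ) ≤ m - 2 := by
        by_contra h
        have hi1 : (i : ℕ) = m - 1 ∧ (j : ℕ) = 0 := by omega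
        apply h1
        rw [hi1.1, hi1.2, show m - 1 + 1 = m by omega, Nat.mod_self]
      have hsj : 1 / 2 ≤ GadgetAux.sc m a b j := by linarith
      have hsall' : ∀ k, k < m → GadgetAux.sc m a b k ≤ GadgetAux.sc m a b j := by
        intro k hk
        rw [← heqij]
        exact hsall k hk
      exact GadgetAux.scalar_two m a b j i j.isLt i.isLt hgt hd2 hdm hsall' hsj heqij.symm
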